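/- Let H be a Hilbert space, K : H → H a compact linear operator, and μ ∈ ℂ. Then dim N(I - μK) = dim N(I - conj(μ)K*), i.e., the dimensions of the null spaces of I - μK and of its adjoint are equal (and finite). -/

import Mathlib

open ContinuousLinearMap Module Submodule Metric

section Helpers

variable {H : Type*} [NormedAddCommGroup H] [InnerProductSpace ℂ H] [CompleteSpace H]

local notation "⟪" x ", " y "⟫" => @inner ℂ _ _ x y

omit [CompleteSpace H] in
private theorem fredholm_aux_ker_unit_mul (T : H →L[ℂ] H) (U : (H →L[ℂ] H)ˣ) :
    LinearMap.ker (((U : H →L[ℂ] H) * T : H →L[ℂ] H) : H →ₗ[ℂ] H) = LinearMap.ker ((T : H →L[ℂ] H) : H →ₗ[ℂ] H) := by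
  ext x
  simp only [LinearMap.mem_ker, ContinuousLinearMap.coe_coe, ContinuousLinearMap.mul_apply]
  constructor
  · intro h
    have h2 : ((↑U⁻¹ : H →L[ℂ] H) * (↑U : H →L[ℂ] H)) (T x) = (↑U⁻¹ : H →L[ℂ] H) 0 := by
      rw [ContinuousLinearMap.mul_apply, h]
    rwa [U.inv_mul, ContinuousLinearMap.one_apply, map_zero] at h2
  · intro h; rw [h]; simp

omit [CompleteSpace H] in
private theorem fredholm_aux_ker_mul_unit_eq (T : H →L[ℂ] H) (U : (H →L[ℂ] H)ˣ) :
    LinearMap.ker ((T * (U : H →L[ℂ] H) : H →L[ℂ] H) : H →ₗ[ℂ] H) =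
      Submodule.map (((ContinuousLinearEquiv.ofUnit U).toLinearEquiv).symm : H →ₗ[ℂ] H)
        (LinearMap.ker ((T : H →L[ℂ] H) : H →ₗ[ℂ] H)) := by
  ext x
  rw [Submodule.mem_map_equiv]
  simp only [LinearEquiv.symm_symm]
  rfl

omit [CompleteSpace H] in
private theorem fredholm_aux_finrank_ker_mul_unit (T : H →L[ℂ] H) (U : (H →L[ℂ] H)ˣ) :
    Module.finrank ℂ (LinearMap.ker ((T * (U : H →L[ℂ] H) : H →L[ℂ] H) : H →ₗ[ℂ] H)) =
      Module.finrank ℂ (LinearMap.ker ((T : H →L[ℂ] H) : H →ₗ[ℂ] H)) := by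
  rw [fredholm_aux_ker_mul_unit_eq]
  exact LinearEquiv.finrank_map_eq _ _

omit [CompleteSpace H] in
private theorem fredholm_aux_fd_ker_mul_unit (T : H →L[ℂ] H) (U : (H →L[ℂ] H)ˣ)
    (h : FiniteDimensional ℂ (LinearMap.ker ((T : H →L[ℂ] H) : H →ₗ[ℂ] H))) :
    FiniteDimensional ℂ (LinearMap.ker ((T * (U : H →L[ℂ] H) : H →L[ℂ] H) : H →ₗ[ℂ] H)) := by
  rw [fredholm_aux_ker_mul_unit_eq]
  exact Module.Finite.map _ _

/-- Key finite-rank lemma. -/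
private theorem fredholm_aux_key_finrank (G : H →L[ℂ] H)
    (h₁ : FiniteDimensional ℂ (LinearMap.range ((G : H →L[ℂ] H) : H →ₗ[ℂ] H)))
    (h₂ : FiniteDimensional ℂ (LinearMap.range ((adjoint G : H →L[ℂ] H) : H →ₗ[ℂ] H))) :
    FiniteDimensional ℂ (LinearMap.ker ((1 - G : H →L[ℂ] H) : H →ₗ[ℂ] H)) ∧
    FiniteDimensional ℂ (LinearMap.ker ((1 - adjoint G : H →L[ℂ] H) : H →ₗ[ℂ] H)) ∧
    finrank ℂ (LinearMap.ker ((1 - G : H →L[ℂ] H) : H →ₗ[ℂ] H)) = finrank ℂ (LinearMap.ker ((1 - adjoint G : H →L[ℂ] H) : H →ₗ[ℂ] H)) := by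
  set W : Submodule ℂ H := LinearMap.range ((G : H →L[ℂ] H) : H →ₗ[ℂ] H) ⊔ LinearMap.range ((adjoint G : H →L[ℂ] H) : H →ₗ[ℂ] H) with hW
  haveI : FiniteDimensional ℂ W := Submodule.finiteDimensional_sup _ _
  have hGW : ∀ x, G x ∈ W := fun x => le_sup_left (α := Submodule ℂ H)
    (LinearMap.mem_range_self (G : H →ₗ[ℂ] H) x)
  have hGW' : ∀ x, adjoint G x ∈ W := fun x => le_sup_right (α := Submodule ℂ H)
    (LinearMap.mem_range_self (adjoint G : H →ₗ[ℂ] H) x)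
  have hS : ∀ x ∈ W, (1 - G) x ∈ W := by
    intro x hx
    simp only [ContinuousLinearMap.sub_apply, ContinuousLinearMap.one_apply]
    exact sub_mem hx (hGW x)
  have hS' : ∀ x ∈ W, (1 - adjoint G) x ∈ W := by
    intro x hx
    simp only [ContinuousLinearMap.sub_apply, ContinuousLinearMap.one_apply]
    exact sub_mem hx (hGW' x)
  set S : W →ₗ[ℂ] W := ((1 - G : H →L[ℂ] H) : H →ₗ[ℂ] H).restrict hS with hSdef
  set S' : W →ₗ[ℂ] W := ((1 - adjoint G : H →L[ℂ] H) : H →ₗ[ℂ] H).restrict hS' with hS'def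
  have hkerle : LinearMap.ker ((1 - G : H →L[ℂ] H) : H →ₗ[ℂ] H) ≤ W := by
    intro x hx
    simp only [LinearMap.mem_ker, ContinuousLinearMap.coe_coe, ContinuousLinearMap.coe_sub', Pi.sub_apply,
      ContinuousLinearMap.one_apply, sub_eq_zero] at hx
    rw [hx]; exact hGW x
  have hkerle' : LinearMap.ker ((1 - adjoint G : H →L[ℂ] H) : H →ₗ[ℂ] H) ≤ W := by
    intro x hx
    simp only [LinearMap.mem_ker, ContinuousLinearMap.coe_coe, ContinuousLinearMap.coe_sub', Pi.sub_apply,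
      ContinuousLinearMap.one_apply, sub_eq_zero] at hx
    rw [hx]; exact hGW' x
  have hmap : ∀ (T : H →L[ℂ] H) (hT : ∀ x ∈ W, T x ∈ W),
      LinearMap.ker ((T : H →L[ℂ] H) : H →ₗ[ℂ] H) ≤ W →
      Submodule.map W.subtype (LinearMap.ker ((T : H →ₗ[ℂ] H).restrict hT))
        = LinearMap.ker ((T : H →L[ℂ] H) : H →ₗ[ℂ] H) := by
    intro T hT hle
    ext x
    simp only [Submodule.mem_map, LinearMap.mem_ker]
    constructor
    · rintro ⟨⟨y, hy⟩, hker, rfl⟩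
      have := congrArg (Subtype.val) hker
      simpa using this
    · intro hker
      exact ⟨⟨x, hle hker⟩, Subtype.ext hker, rfl⟩
  have hm1 := hmap (1 - G) hS hkerle
  have hm2 := hmap (1 - adjoint G) hS' hkerle'
  have hfr1 : finrank ℂ (LinearMap.ker ((1 - G : H →L[ℂ] H) : H →ₗ[ℂ] H)) = finrank ℂ (LinearMap.ker S) := by
    rw [← hm1, Submodule.finrank_map_subtype_eq]
  have hfr2 : finrank ℂ (LinearMap.ker ((1 - adjoint G : H →L[ℂ] H) : H →ₗ[ℂ] H))
      = finrank ℂ (LinearMap.ker S') := by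
    rw [← hm2, Submodule.finrank_map_subtype_eq]
  have hfd1 : FiniteDimensional ℂ (LinearMap.ker ((1 - G : H →L[ℂ] H) : H →ₗ[ℂ] H)) :=
    Submodule.finiteDimensional_of_le hkerle
  have hfd2 : FiniteDimensional ℂ (LinearMap.ker ((1 - adjoint G : H →L[ℂ] H) : H →ₗ[ℂ] H)) :=
    Submodule.finiteDimensional_of_le hkerle'
  refine ⟨hfd1, hfd2, ?_⟩
  rw [hfr1, hfr2]
  have hadj : ∀ (w v : W), ⟪(S w : H), (v : H)⟫ = ⟪(w : H), (S' v : H)⟫ := by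
    intro w v
    have h1 : (S w : H) = (w : H) - G w := by
      simp [hSdef, LinearMap.restrict_coe_apply]
    have h2 : (S' v : H) = (v : H) - adjoint G v := by
      simp [hS'def, LinearMap.restrict_coe_apply]
    rw [h1, h2, inner_sub_left, inner_sub_right, adjoint_inner_right]
  have hkerS' : LinearMap.ker S' = (LinearMap.range S)ᗮ := by
    ext v
    simp only [LinearMap.mem_ker, Submodule.mem_orthogonal]
    constructor
    · intro hv u hu
      obtain ⟨w, rfl⟩ := hu
      rw [Submodule.coe_inner, hadj w v, hv]
      simp
    · intro hv
      have h0 : ∀ w : W, ⟪(w : H), (S' v : H)⟫ = 0 := by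
        intro w
        rw [← hadj w v]
        exact hv (S w) (LinearMap.mem_range_self S w)
      have := h0 (S' v)
      rw [← Submodule.coe_inner, inner_self_eq_zero] at this
      exact this
  have e1 := LinearMap.finrank_range_add_finrank_ker S
  have e2 := LinearMap.finrank_range_add_finrank_ker S'
  have e3 := Submodule.finrank_add_finrank_orthogonal (K := LinearMap.range S) (𝕜 := ℂ) (E := W)
  rw [hkerS']
  omega

/-- adjoint of a finite-rank operator has finite rank. -/
private theorem fredholm_aux_adjoint_finiteRank (F : H →L[ℂ] H)
    (h : FiniteDimensional ℂ (LinearMap.range ((F : H →L[ℂ] H) : H →ₗ[ℂ] H))) :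
    FiniteDimensional ℂ (LinearMap.range ((adjoint F : H →L[ℂ] H) : H →ₗ[ℂ] H)) := by
  set V : Submodule ℂ H := LinearMap.range ((F : H →L[ℂ] H) : H →ₗ[ℂ] H) with hV
  haveI : FiniteDimensional ℂ V := h
  haveI : CompleteSpace V := FiniteDimensional.complete ℂ V
  have hle : LinearMap.range ((adjoint F : H →L[ℂ] H) : H →ₗ[ℂ] H) ≤
      Submodule.map (adjoint F : H →ₗ[ℂ] H) V := by
    rintro _ ⟨x, rfl⟩
    have hdec : adjoint F x = adjoint F (orthogonalProjection V x) := by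
      have hperp : (x : H) - orthogonalProjection V x ∈ Vᗮ :=
        sub_starProjection_mem_orthogonal x
      have hzero : adjoint F ((x : H) - orthogonalProjection V x) = 0 := by
        set q := (x : H) - orthogonalProjection V x
        have : ⟪adjoint F q, adjoint F q⟫ = 0 := by
          rw [adjoint_inner_left]
          exact (Submodule.mem_orthogonal' V q).mp hperp _ (LinearMap.mem_range_self (F : H →ₗ[ℂ] H) _)
        rwa [inner_self_eq_zero] at this
      have h3 : adjoint F x - adjoint F (orthogonalProjection V x : H) = 0 := by
        rw [← map_sub]; exact hzero
      exact sub_eq_zero.mp h3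
    rw [ContinuousLinearMap.coe_coe, hdec]
    exact Submodule.mem_map_of_mem (Submodule.coe_mem _)
  exact Submodule.finiteDimensional_of_le hle

omit [CompleteSpace H] in
/-- finite-rank approximation of a compact operator on a Hilbert space. -/
private theorem fredholm_aux_exists_finiteRank_approx (A : H →L[ℂ] H)
    (hA : IsCompactOperator A) :
    ∃ F : H →L[ℂ] H, FiniteDimensional ℂ (LinearMap.range ((F : H →L[ℂ] H) : H →ₗ[ℂ] H)) ∧ ‖A - F‖ < 1 := by
  obtain ⟨C, hC, hsub⟩ := hA.image_closedBall_subset_compact 1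
  obtain ⟨t, htfin, htcov⟩ := (Metric.totallyBounded_iff).mp hC.totallyBounded (1/2) (by norm_num)
  set Y : Submodule ℂ H := Submodule.span ℂ t with hY
  haveI : FiniteDimensional ℂ Y := FiniteDimensional.span_of_finite ℂ htfin
  haveI : CompleteSpace Y := FiniteDimensional.complete ℂ Y
  set F : H →L[ℂ] H := Y.subtypeL ∘L ((orthogonalProjection Y) ∘L A) with hF
  refine ⟨F, ?_, ?_⟩
  · have hle : LinearMap.range ((F : H →L[ℂ] H) : H →ₗ[ℂ] H) ≤ Y := by
      rintro _ ⟨x, rfl⟩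
      exact Submodule.coe_mem _
    exact Submodule.finiteDimensional_of_le hle
  · have hball : ∀ x ∈ closedBall (0 : H) 1, ‖(A - F) x‖ ≤ 1/2 := by
      intro x hx
      have hAx : A x ∈ C := hsub ⟨x, hx, rfl⟩
      have := htcov hAx
      rw [Set.mem_iUnion₂] at this
      obtain ⟨y, hyt, hy⟩ := this
      have hyY : y ∈ Y := Submodule.subset_span hyt
      have hmin : ‖A x - orthogonalProjection Y (A x)‖ = ⨅ w : Y, ‖A x - w‖ :=
        starProjection_minimal (A x)
      have hle2 : (⨅ w : Y, ‖A x - w‖) ≤ ‖A x - y‖ :=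
        ciInf_le ⟨0, fun r ⟨w, hw⟩ => hw ▸ norm_nonneg _⟩ (⟨y, hyY⟩ : Y)
      have hFx : (F x : H) = (orthogonalProjection Y (A x) : H) := rfl
      have heq : ‖(A - F) x‖ = ‖A x - orthogonalProjection Y (A x)‖ := by
        simp [ContinuousLinearMap.sub_apply, hFx]
      rw [heq, hmin]
      have : ‖A x - y‖ ≤ 1/2 := le_of_lt (by simpa [dist_eq_norm] using hy)
      linarith
    have hA2 : ‖A - F‖ ≤ 1/2 := by
      refine ContinuousLinearMap.opNorm_le_bound _ (by norm_num) fun x => ?_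
      rcases eq_or_ne x 0 with rfl | hx0
      · simp
      · have hu : ‖(‖x‖⁻¹ • x)‖ = 1 := norm_smul_inv_norm hx0
        have humem : (‖x‖⁻¹ • x) ∈ closedBall (0 : H) 1 := by
          simp [mem_closedBall_zero_iff, hu]
        have h1 := hball _ humem
        have h2 : (A - F) x = ‖x‖ • (A - F) (‖x‖⁻¹ • x) := by
          rw [(A - F).map_smul_of_tower, smul_smul]
          rw [mul_inv_cancel₀ (norm_ne_zero_iff.mpr hx0), one_smul]
        rw [h2, norm_smul]
        simp only [Real.norm_eq_abs, abs_of_nonneg (norm_nonneg x)]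
        calc ‖x‖ * ‖(A - F) (‖x‖⁻¹ • x)‖ ≤ ‖x‖ * (1/2) :=
              mul_le_mul_of_nonneg_left h1 (norm_nonneg x)
          _ = 1/2 * ‖x‖ := by ring
    linarith

end Helpers

/-- Fredholm alternative: the null spaces of `I - μK` and of its adjoint
`I - conj(μ)K*` are finite dimensional of equal dimension. -/
theorem fredholm_kernel_dim_eq_adjoint_kernel_dim
    {H : Type*} [NormedAddCommGroup H] [InnerProductSpace ℂ H] [CompleteSpace H]
    (K : H →L[ℂ] H) (hK : IsCompactOperator K) (μ : ℂ) :
    FiniteDimensional ℂ (LinearMap.ker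
      (((ContinuousLinearMap.id ℂ H - μ • K : H →L[ℂ] H) : H →ₗ[ℂ] H))) ∧
    FiniteDimensional ℂ (LinearMap.ker
      (((ContinuousLinearMap.id ℂ H - (starRingEnd ℂ μ) • ContinuousLinearMap.adjoint K :
        H →L[ℂ] H) : H →ₗ[ℂ] H))) ∧
    Module.finrank ℂ (LinearMap.ker
      (((ContinuousLinearMap.id ℂ H - μ • K : H →L[ℂ] H) : H →ₗ[ℂ] H))) =
      Module.finrank ℂ (LinearMap.ker
        (((ContinuousLinearMap.id ℂ H - (starRingEnd ℂ μ) • ContinuousLinearMap.adjoint K :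
          H →L[ℂ] H) : H →ₗ[ℂ] H))) := by
  set A : H →L[ℂ] H := μ • K with hAdef
  have hAc : IsCompactOperator A := by
    have := hK.smul μ
    simpa [hAdef] using this
  obtain ⟨F, hFfd, hnorm⟩ := fredholm_aux_exists_finiteRank_approx A hAc
  haveI := hFfd
  set U : (H →L[ℂ] H)ˣ := Units.oneSub (A - F) hnorm with hUdef
  have hUval : (U : H →L[ℂ] H) = 1 - (A - F) := rfl
  set G : H →L[ℂ] H := (↑U⁻¹ : H →L[ℂ] H) * F with hGdef
  have hfact : (1 : H →L[ℂ] H) - A = (U : H →L[ℂ] H) * (1 - G) := by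
    rw [hGdef, mul_sub, mul_one, ← mul_assoc, U.mul_inv, one_mul, hUval]
    abel
  have hid : ContinuousLinearMap.id ℂ H - μ • K = 1 - A := rfl
  have hadj1 : ContinuousLinearMap.adjoint ((1 : H →L[ℂ] H) - A)
      = ContinuousLinearMap.id ℂ H - (starRingEnd ℂ μ) • ContinuousLinearMap.adjoint K := by
    rw [← ContinuousLinearMap.star_eq_adjoint, star_sub, star_one, hAdef, star_smul,
      ContinuousLinearMap.star_eq_adjoint, starRingEnd_apply]
    rfl
  have hadjfact : ContinuousLinearMap.adjoint ((1 : H →L[ℂ] H) - A)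
      = (1 - ContinuousLinearMap.adjoint G) * ContinuousLinearMap.adjoint (U : H →L[ℂ] H) := by
    rw [hfact, ContinuousLinearMap.mul_def, ContinuousLinearMap.adjoint_comp,
      ← ContinuousLinearMap.mul_def]
    congr 1
    rw [← ContinuousLinearMap.star_eq_adjoint, star_sub, star_one,
      ContinuousLinearMap.star_eq_adjoint]
  set U' : (H →L[ℂ] H)ˣ :=
    { val := ContinuousLinearMap.adjoint (U : H →L[ℂ] H)
      inv := ContinuousLinearMap.adjoint (↑U⁻¹ : H →L[ℂ] H)
      val_inv := by
        rw [← ContinuousLinearMap.star_eq_adjoint, ← ContinuousLinearMap.star_eq_adjoint,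
          ← star_mul, U.inv_mul, star_one]
      inv_val := by
        rw [← ContinuousLinearMap.star_eq_adjoint, ← ContinuousLinearMap.star_eq_adjoint,
          ← star_mul, U.mul_inv, star_one] } with hU'def
  have hRG : FiniteDimensional ℂ (LinearMap.range ((G : H →L[ℂ] H) : H →ₗ[ℂ] H)) := by
    have heq : LinearMap.range ((G : H →L[ℂ] H) : H →ₗ[ℂ] H) = Submodule.map ((↑U⁻¹ : H →L[ℂ] H) : H →ₗ[ℂ] H)
        (LinearMap.range ((F : H →L[ℂ] H) : H →ₗ[ℂ] H)) := by
      ext y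
      simp only [LinearMap.mem_range, Submodule.mem_map, ContinuousLinearMap.coe_coe]
      constructor
      · rintro ⟨x, rfl⟩
        exact ⟨F x, ⟨x, rfl⟩, rfl⟩
      · rintro ⟨z, ⟨x, rfl⟩, rfl⟩
        exact ⟨x, rfl⟩
    rw [heq]
    exact Module.Finite.map (LinearMap.range ((F : H →L[ℂ] H) : H →ₗ[ℂ] H)) _
  have hRG' : FiniteDimensional ℂ (LinearMap.range ((ContinuousLinearMap.adjoint G : H →L[ℂ] H) : H →ₗ[ℂ] H)) := by
    haveI := fredholm_aux_adjoint_finiteRank F hFfd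
    have hle : LinearMap.range ((ContinuousLinearMap.adjoint G : H →L[ℂ] H) : H →ₗ[ℂ] H)
        ≤ LinearMap.range ((ContinuousLinearMap.adjoint F : H →L[ℂ] H) : H →ₗ[ℂ] H) := by
      rintro _ ⟨x, rfl⟩
      have : ContinuousLinearMap.adjoint G x
          = ContinuousLinearMap.adjoint F (ContinuousLinearMap.adjoint (↑U⁻¹ : H →L[ℂ] H) x) := by
        rw [hGdef, ContinuousLinearMap.mul_def, ContinuousLinearMap.adjoint_comp]
        rfl
      rw [ContinuousLinearMap.coe_coe, this]
      exact LinearMap.mem_range_self (ContinuousLinearMap.adjoint F : H →ₗ[ℂ] H) _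
    exact Submodule.finiteDimensional_of_le hle
  obtain ⟨k1, k2, k3⟩ := fredholm_aux_key_finrank G hRG hRG'
  refine ⟨?_, ?_, ?_⟩
  · rw [hid, hfact, fredholm_aux_ker_unit_mul]
    exact k1
  · rw [← hadj1, hadjfact]
    exact fredholm_aux_fd_ker_mul_unit _ U' k2
  · rw [hid, hfact, fredholm_aux_ker_unit_mul, ← hadj1, hadjfact]
    rw [show ContinuousLinearMap.adjoint (U : H →L[ℂ] H) = (U' : H →L[ℂ] H) from rfl]
    rw [fredholm_aux_finrank_ker_mul_unit]
    exact k3
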